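/- Let $\mathcal{H}$ be a finite-dimensional Hilbert space, $l$ a positive integer, and $\tilde{\mathcal{H}} = \mathcal{H} \oplus \mathcal{H}_1 \oplus \cdots \oplus \mathcal{H}_l$ where each $\mathcal{H}_j$ is a copy of $\mathcal{H}$ via an isometry $\mathcal{T}_j:\mathcal{H}\to\mathcal{H}_j$. For $0<\alpha_j<1$ define $\mathcal{T}_{j,\alpha_j} := \sqrt{1-\alpha_j}\,\iota + \sqrt{\alpha_j}\,\mathcal{T}_j$ where $\iota$ is the inclusion of $\mathcal{H}$ into $\tilde{\mathcal{H}}$. Let $W_1,\dots,W_l \le \mathcal{H}$ be subspaces, let $\mathbf{W} := \sum_{j=1}^l \mathcal{T}_{j,\alpha_j}(W_j)$ (sum of subspaces in $\tilde{\mathcal{H}}$), let $|h\rangle\in\mathcal{H}$ be a unit vector, let $\epsilon_j := \|\Pi_{W_j}|h\rangle\|_2^2$, and let $\alpha := \min_j \alpha_j$. Then $\max_{j\in[l]} (1-\alpha_j)\epsilon_j \le \|\Pi_{\mathbf{W}}|h\rangle\|_2^2 \le \frac{1-\alpha}{\alpha}\sum_{j=1}^l \epsilon_j$. -/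

import Mathlib

set_option maxHeartbeats 1000000 in
/-- Tilted span of subspaces (Proposition: union bound for the tilted span).
`H` is embedded isometrically in `E` via `emb`, and `T j : H → E` are isometries
onto mutually orthogonal subspaces orthogonal to the image of `emb`.
`Tα j = √(1-αⱼ) emb + √αⱼ T j` and `Wbig` is the `(α₁,…,α_l)`-tilted span. -/
theorem stmt2 {H E : Type*}
    [NormedAddCommGroup H] [InnerProductSpace ℂ H] [FiniteDimensional ℂ H]
    [NormedAddCommGroup E] [InnerProductSpace ℂ E] [FiniteDimensional ℂ E]
    {l : ℕ} (hl : 0 < l)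
    (emb : H →ₗᵢ[ℂ] E) (T : Fin l → (H →ₗᵢ[ℂ] E))
    (horth1 : ∀ j, ∀ u v : H, (inner ℂ (emb u) (T j v) : ℂ) = 0)
    (horth2 : ∀ i j, i ≠ j → ∀ u v : H, (inner ℂ (T i u) (T j v) : ℂ) = 0)
    (α : Fin l → ℝ) (hα : ∀ j, 0 < α j ∧ α j < 1)
    (W : Fin l → Submodule ℂ H)
    (h : H) (hh : ‖h‖ = 1)
    (Tα : Fin l → (H →ₗ[ℂ] E))
    (hTα : ∀ j, Tα j = (Complex.ofReal (Real.sqrt (1 - α j))) • emb.toLinearMap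
        + (Complex.ofReal (Real.sqrt (α j))) • (T j).toLinearMap)
    (Wbig : Submodule ℂ E) (hWbig : Wbig = ⨆ j, (W j).map (Tα j))
    (ε : Fin l → ℝ) (hε : ∀ j, ε j = ‖(Submodule.orthogonalProjection (W j) h : H)‖ ^ 2)
    (αmin : ℝ) (hαmin : αmin = ⨅ j, α j) :
    (∀ j, (1 - α j) * ε j ≤ ‖(Submodule.orthogonalProjection Wbig (emb h) : E)‖ ^ 2) ∧
    ‖(Submodule.orthogonalProjection Wbig (emb h) : E)‖ ^ 2 ≤ (1 - αmin) / αmin * ∑ j, ε j := by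
  haveI : Nonempty (Fin l) := ⟨⟨0, hl⟩⟩
  set x : E := (Submodule.orthogonalProjection Wbig (emb h) : E) with hxdef
  have hxmem : x ∈ Wbig := SetLike.coe_mem _
  -- αmin facts
  obtain ⟨j0, hj0⟩ := Finite.exists_min α
  have hαmin_eq : αmin = α j0 := by
    rw [hαmin]
    exact le_antisymm (ciInf_le (Set.Finite.bddBelow (Set.finite_range α)) j0) (le_ciInf hj0)
  have hαmin_pos : 0 < αmin := hαmin_eq ▸ (hα j0).1
  have hαmin_lt : αmin < 1 := hαmin_eq ▸ (hα j0).2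
  have hαmin_le : ∀ j, αmin ≤ α j := fun j => hαmin_eq ▸ hj0 j
  have hε_nonneg : ∀ j, 0 ≤ ε j := fun j => (hε j) ▸ sq_nonneg _
  -- basic inner ℂ product computations
  have hTemb : ∀ j (u v : H), (inner ℂ (T j u) (emb v) : ℂ) = 0 := by
    intro j u v
    rw [← inner_conj_symm, horth1, map_zero]
  have hTαemb : ∀ j (u v : H), (inner ℂ (Tα j u) (emb v) : ℂ)
      = (Real.sqrt (1 - α j) : ℂ) * inner ℂ u v := by
    intro j u v
    rw [hTα j]
    simp only [LinearMap.add_apply, LinearMap.smul_apply, LinearIsometry.coe_toLinearMap,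
      inner_add_left, inner_smul_left, Complex.conj_ofReal, LinearIsometry.inner_map_map]
    rw [hTemb]
    ring
  -- key: for w ∈ Wbig, ⟪w, emb h⟫ = ⟪w, x⟫
  have hproj : ∀ w ∈ Wbig, (inner ℂ w (emb h) : ℂ) = inner ℂ w x := by
    intro w hw
    have h0 : (inner ℂ w (emb h - x) : ℂ) = 0 :=
      (Submodule.mem_orthogonal _ _).1 (Submodule.sub_starProjection_mem_orthogonal (K := Wbig) (emb h)) w hw
    rw [inner_sub_right, sub_eq_zero] at h0
    exact h0
  -- key: for w ∈ W j, ⟪w, h⟫ = ⟪w, Π_{W j} h⟫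
  have hprojW : ∀ j, ∀ w ∈ W j, (inner ℂ w h : ℂ) = inner ℂ w (Submodule.orthogonalProjection (W j) h : H) := by
    intro j w hw
    have h0 : (inner ℂ w (h - (Submodule.orthogonalProjection (W j) h : H)) : ℂ) = 0 :=
      (Submodule.mem_orthogonal _ _).1 (Submodule.sub_starProjection_mem_orthogonal (K := W j) h) w hw
    rw [inner_sub_right, sub_eq_zero] at h0
    exact h0
  constructor
  · -- lower bound
    intro j
    set p : H := (Submodule.orthogonalProjection (W j) h : H) with hpdef
    have hα1 : (0:ℝ) ≤ 1 - α j := by linarith [(hα j).2]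
    by_cases hp : p = 0
    · have : ε j = 0 := by rw [hε j, ← hpdef, hp]; simp
      rw [this, mul_zero]
      positivity
    · have hpW : p ∈ W j := SetLike.coe_mem _
      have hwmem : Tα j p ∈ Wbig := by
        rw [hWbig]
        exact le_iSup (fun j => (W j).map (Tα j)) j ⟨p, hpW, rfl⟩
      have hph : (inner ℂ p h : ℂ) = ((‖p‖^2 : ℝ) : ℂ) := by
        rw [hprojW j p hpW, ← hpdef, inner_self_eq_norm_sq_to_K]
        norm_cast
      -- norm of Tα j p
      have hnorm : ‖Tα j p‖ = ‖p‖ := by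
        have horth : (inner ℂ ((Real.sqrt (1 - α j) : ℂ) • (emb p)) ((Real.sqrt (α j) : ℂ) • (T j p)) : ℂ) = 0 := by
          rw [inner_smul_left, inner_smul_right, horth1]
          ring
        have happ : Tα j p = (Real.sqrt (1 - α j) : ℂ) • (emb p) + (Real.sqrt (α j) : ℂ) • (T j p) := by
          rw [hTα j]; rfl
        have hsq := norm_add_sq_eq_norm_sq_add_norm_sq_of_inner_eq_zero _ _ horth
        rw [← happ] at hsq
        have h1 : ‖(Real.sqrt (1 - α j) : ℂ) • (emb p)‖ = Real.sqrt (1 - α j) * ‖p‖ := by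
          rw [norm_smul]
          simp [Real.sqrt_nonneg, abs_of_nonneg]
        have h2 : ‖(Real.sqrt (α j) : ℂ) • (T j p)‖ = Real.sqrt (α j) * ‖p‖ := by
          rw [norm_smul]
          simp [Real.sqrt_nonneg, abs_of_nonneg]
        have e1 : Real.sqrt (1 - α j) * Real.sqrt (1 - α j) = 1 - α j :=
          Real.mul_self_sqrt hα1
        have e2 : Real.sqrt (α j) * Real.sqrt (α j) = α j :=
          Real.mul_self_sqrt (hα j).1.le
        have : ‖Tα j p‖ * ‖Tα j p‖ = ‖p‖ * ‖p‖ := by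
          rw [hsq, h1, h2]; nlinarith
        nlinarith [norm_nonneg (Tα j p), norm_nonneg p]
      -- the inner ℂ product bound
      have hval : (inner ℂ (Tα j p) (emb h) : ℂ) = ((Real.sqrt (1 - α j) * ‖p‖^2 : ℝ) : ℂ) := by
        rw [hTαemb, hph]
        push_cast
        ring
      have hbound : ‖(inner ℂ (Tα j p) (emb h) : ℂ)‖ ≤ ‖Tα j p‖ * ‖x‖ := by
        rw [hproj _ hwmem]
        exact norm_inner_le_norm _ _
      rw [hval, hnorm] at hbound
      have habs : ‖((Real.sqrt (1 - α j) * ‖p‖^2 : ℝ) : ℂ)‖ = Real.sqrt (1 - α j) * ‖p‖^2 := by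
        rw [Complex.norm_real, Real.norm_of_nonneg (by positivity)]
      rw [habs] at hbound
      have hppos : 0 < ‖p‖ := norm_pos_iff.2 hp
      have hstep : Real.sqrt (1 - α j) * ‖p‖ ≤ ‖x‖ := by
        have := hbound
        nlinarith
      have hms := mul_self_le_mul_self (by positivity) hstep
      rw [hε j, ← hpdef]
      calc (1 - α j) * ‖p‖^2
          = (Real.sqrt (1 - α j) * ‖p‖) * (Real.sqrt (1 - α j) * ‖p‖) := by
            linear_combination (‖p‖ ^ 2 : ℝ) * (Real.mul_self_sqrt hα1).symm
        _ ≤ ‖x‖ * ‖x‖ := hms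
        _ = ‖x‖^2 := (sq ‖x‖).symm
  · -- upper bound
    obtain ⟨f, hf, hfsum⟩ := (Submodule.mem_iSup_iff_exists_finsupp _ x).1 (by rw [← hWbig]; exact hxmem)
    choose w hw1 hw2 using fun j => Submodule.mem_map.1 (hf j)
    have hxsum : x = ∑ j, Tα j (w j) := by
      rw [← hfsum, Finsupp.sum_fintype _ _ (fun _ => rfl)]
      exact Finset.sum_congr rfl fun j _ => (hw2 j).symm
    set a : H := ∑ j, (Real.sqrt (1 - α j) : ℂ) • w j with hadef
    set b : E := ∑ j, (Real.sqrt (α j) : ℂ) • (T j (w j)) with hbdef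
    have hxab : x = emb a + b := by
      rw [hxsum, hadef, hbdef, map_sum emb _ Finset.univ]
      rw [← Finset.sum_add_distrib]
      refine Finset.sum_congr rfl fun j _ => ?_
      rw [hTα j, map_smul]
      rfl
    have hab_orth : (inner ℂ (emb a) b : ℂ) = 0 := by
      rw [hbdef, inner_sum]
      refine Finset.sum_eq_zero fun j _ => ?_
      rw [inner_smul_right, horth1, mul_zero]
    have hb_sq : ‖b‖^2 = ∑ j, α j * ‖w j‖^2 := by
      have hbb : (inner ℂ b b : ℂ) = ((∑ j, α j * ‖w j‖^2 : ℝ) : ℂ) := by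
        rw [hbdef, sum_inner]
        push_cast
        refine Finset.sum_congr rfl fun i _ => ?_
        rw [inner_sum, Finset.sum_eq_single i]
        · rw [inner_smul_left, inner_smul_right, LinearIsometry.inner_map_map,
            inner_self_eq_norm_sq_to_K, Complex.conj_ofReal]
          rw [← mul_assoc, ← Complex.ofReal_mul, Real.mul_self_sqrt (hα i).1.le]
          rfl
        · intro j _ hji
          rw [inner_smul_left, inner_smul_right, horth2 i j (Ne.symm hji), mul_zero, mul_zero]
        · intro hi
          exact absurd (Finset.mem_univ i) hi
      have := norm_sq_eq_re_inner (𝕜 := ℂ) b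
      rw [hbb] at this
      exact this.trans (Complex.ofReal_re _)
    have hx_sq : ‖x‖^2 = ‖a‖^2 + ∑ j, α j * ‖w j‖^2 := by
      have hsq := norm_add_sq_eq_norm_sq_add_norm_sq_of_inner_eq_zero _ _ hab_orth
      rw [← hxab] at hsq
      have hea : ‖emb a‖ = ‖a‖ := emb.norm_map a
      rw [hea] at hsq
      have e3 : ‖x‖^2 = ‖a‖^2 + ‖b‖^2 := by rw [pow_two, pow_two, pow_two]; exact hsq
      rw [e3, hb_sq]
    set N : ℝ := ‖x‖^2 with hNdef
    have hN_nonneg : 0 ≤ N := sq_nonneg _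
    have hsum_w : αmin * ∑ j, ‖w j‖^2 ≤ N := by
      have h1 : ∑ j, αmin * ‖w j‖^2 ≤ ∑ j, α j * ‖w j‖^2 :=
        Finset.sum_le_sum fun j _ => mul_le_mul_of_nonneg_right (hαmin_le j) (sq_nonneg _)
      rw [← Finset.mul_sum] at h1
      nlinarith [sq_nonneg ‖a‖]
    -- N = Σ √(1-αj) re ⟪w j, h⟫
    have hNinner : (inner ℂ x (emb h) : ℂ) = ((N : ℝ) : ℂ) := by
      rw [hproj x hxmem, inner_self_eq_norm_sq_to_K]
      norm_cast
    have hNexp : ((N : ℝ) : ℂ) = ∑ j, (Real.sqrt (1 - α j) : ℂ) * inner ℂ (w j) h := by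
      rw [← hNinner, hxsum, sum_inner]
      exact Finset.sum_congr rfl fun j _ => hTαemb j (w j) h
    have hNre : N = ∑ j, Real.sqrt (1 - α j) * (inner ℂ (w j) h : ℂ).re := by
      have := congrArg Complex.re hNexp
      rw [Complex.ofReal_re, Complex.re_sum] at this
      rw [this]
      refine Finset.sum_congr rfl fun j _ => ?_
      rw [Complex.mul_re, Complex.ofReal_re, Complex.ofReal_im]
      ring
    have hterm : ∀ j, Real.sqrt (1 - α j) * (inner ℂ (w j) h : ℂ).re
        ≤ Real.sqrt ((1 - α j) * ε j) * ‖w j‖ := by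
      intro j
      have hα1 : (0:ℝ) ≤ 1 - α j := by linarith [(hα j).2]
      have h1 : (inner ℂ (w j) h : ℂ).re ≤ ‖(inner ℂ (w j) h : ℂ)‖ := Complex.re_le_norm _
      have h2 : ‖(inner ℂ (w j) h : ℂ)‖ ≤ ‖w j‖ * Real.sqrt (ε j) := by
        rw [hprojW j (w j) (hw1 j)]
        calc ‖(inner ℂ (w j) ((Submodule.orthogonalProjection (W j) h : H)) : ℂ)‖
            ≤ ‖w j‖ * ‖(Submodule.orthogonalProjection (W j) h : H)‖ := norm_inner_le_norm _ _
          _ = ‖w j‖ * Real.sqrt (ε j) := by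
              rw [hε j, Real.sqrt_sq (norm_nonneg _)]
      have h3 : Real.sqrt ((1 - α j) * ε j) = Real.sqrt (1 - α j) * Real.sqrt (ε j) :=
        Real.sqrt_mul hα1 _
      calc Real.sqrt (1 - α j) * (inner ℂ (w j) h : ℂ).re
          ≤ Real.sqrt (1 - α j) * (‖w j‖ * Real.sqrt (ε j)) := by
            have := Real.sqrt_nonneg (1 - α j)
            nlinarith [le_trans h1 h2]
        _ = Real.sqrt ((1 - α j) * ε j) * ‖w j‖ := by rw [h3]; ring
    have hNle : N ≤ ∑ j, Real.sqrt ((1 - α j) * ε j) * ‖w j‖ := by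
      rw [hNre]
      exact Finset.sum_le_sum fun j _ => hterm j
    have hCS : (∑ j, Real.sqrt ((1 - α j) * ε j) * ‖w j‖)^2
        ≤ (∑ j, (1 - α j) * ε j) * ∑ j, ‖w j‖^2 := by
      have := Finset.sum_mul_sq_le_sq_mul_sq Finset.univ
        (fun j => Real.sqrt ((1 - α j) * ε j)) (fun j => ‖w j‖)
      calc (∑ j, Real.sqrt ((1 - α j) * ε j) * ‖w j‖)^2
          ≤ (∑ j, Real.sqrt ((1 - α j) * ε j)^2) * ∑ j, ‖w j‖^2 := this
        _ = (∑ j, (1 - α j) * ε j) * ∑ j, ‖w j‖^2 := by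
            congr 1
            refine Finset.sum_congr rfl fun j _ => ?_
            exact Real.sq_sqrt (by nlinarith [(hα j).2, hε_nonneg j])
    have hA : (∑ j, (1 - α j) * ε j) ≤ (1 - αmin) * ∑ j, ε j := by
      rw [Finset.mul_sum]
      exact Finset.sum_le_sum fun j _ =>
        mul_le_mul_of_nonneg_right (by linarith [hαmin_le j]) (hε_nonneg j)
    have hA_nonneg : 0 ≤ ∑ j, (1 - α j) * ε j :=
      Finset.sum_nonneg fun j _ => mul_nonneg (by linarith [(hα j).2]) (hε_nonneg j)
    have hwsq_nonneg : 0 ≤ ∑ j, ‖w j‖^2 := Finset.sum_nonneg fun j _ => sq_nonneg _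
    have hNsq : N^2 ≤ (1 - αmin) * (∑ j, ε j) * (∑ j, ‖w j‖^2) := by
      have h1 : N^2 ≤ (∑ j, Real.sqrt ((1 - α j) * ε j) * ‖w j‖)^2 :=
        pow_le_pow_left₀ hN_nonneg hNle 2
      have h2 := le_trans h1 hCS
      nlinarith [hA]
    by_cases hN0 : N = 0
    · rw [hN0]
      have h1 : 0 ≤ ∑ j, ε j := Finset.sum_nonneg fun j _ => hε_nonneg j
      exact mul_nonneg (div_nonneg (by linarith) hαmin_pos.le) h1
    · have hNpos : 0 < N := lt_of_le_of_ne hN_nonneg (Ne.symm hN0)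
      have hws : ∑ j, ‖w j‖^2 ≤ N / αmin := by
        rw [le_div_iff₀ hαmin_pos]
        nlinarith [hsum_w]
      have hεsum : 0 ≤ ∑ j, ε j := Finset.sum_nonneg fun j _ => hε_nonneg j
      rw [div_mul_eq_mul_div, le_div_iff₀ hαmin_pos]
      nlinarith [hNsq, hws, mul_le_mul_of_nonneg_left hws (mul_nonneg (by linarith : (0:ℝ) ≤ 1 - αmin) hεsum)]
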